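/- Let a be an n×n complex matrix and b an n×n complex matrix with det(1+b) ≠ 0. Then q(t) := C^{-1}(e^{−2at} C(b)) = (1 − e^{−2at}C(b))(1 + e^{−2at}C(b))^{-1} solves the matrix Riccati initial value problem q'(t) = (1+q)a(1−q), q(0) = b, on any interval where det(1 + e^{−2at}C(b)) ≠ 0. -/

import Mathlib

open Matrix NormedSpace

attribute [local instance] Matrix.linftyOpNormedRing Matrix.linftyOpNormedAlgebra

/-- The Cayley transform `C(X) = (1 − X)(1 + X)⁻¹`. -/
noncomputable def cayley {n : ℕ} (X : Matrix (Fin n) (Fin n) ℂ) : Matrix (Fin n) (Fin n) ℂ :=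
  (1 - X) * (1 + X)⁻¹

/-- For matrices `a`, `b` with `det(1+b) ≠ 0`, the function
`q(t) = C⁻¹(e^{−2at} C(b)) = (1 − e^{−2at}C(b))(1 + e^{−2at}C(b))⁻¹` solves the Riccati
initial value problem `q' = (1+q)a(1−q)`, `q(0) = b`, on any interval where
`det(1 + e^{−2at}C(b)) ≠ 0`. -/

lemma one_add_cayley {n : ℕ} (X : Matrix (Fin n) (Fin n) ℂ) (hX : (1 + X).det ≠ 0) :
    1 + cayley X = (1 + 1) * (1 + X)⁻¹ := by
  have hu : IsUnit (1 + X).det := isUnit_iff_ne_zero.mpr hX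
  have hN1 : (1 + X) * (1 + X)⁻¹ = 1 := Matrix.mul_nonsing_inv _ hu
  have hN2 : (1 + X)⁻¹ * (1 + X) = 1 := Matrix.nonsing_inv_mul _ hu
  have : (1 + cayley X) * ((1 + X) * (1 + X)⁻¹) = (1 + 1) * (1 + X)⁻¹ := by
    unfold cayley
    rw [← Matrix.mul_assoc, add_mul, one_mul, Matrix.mul_assoc, hN2, mul_one]
    congr 1
    noncomm_ring
  simpa [hN1] using this

lemma one_sub_cayley {n : ℕ} (X : Matrix (Fin n) (Fin n) ℂ) (hX : (1 + X).det ≠ 0) :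
    1 - cayley X = (X + X) * (1 + X)⁻¹ := by
  have hu : IsUnit (1 + X).det := isUnit_iff_ne_zero.mpr hX
  have hN1 : (1 + X) * (1 + X)⁻¹ = 1 := Matrix.mul_nonsing_inv _ hu
  have hN2 : (1 + X)⁻¹ * (1 + X) = 1 := Matrix.nonsing_inv_mul _ hu
  have : (1 - cayley X) * ((1 + X) * (1 + X)⁻¹) = (X + X) * (1 + X)⁻¹ := by
    unfold cayley
    rw [← Matrix.mul_assoc, sub_mul, one_mul, Matrix.mul_assoc, hN2, mul_one]
    congr 1
    noncomm_ring
  simpa [hN1] using this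

lemma cayley_cayley {n : ℕ} (b : Matrix (Fin n) (Fin n) ℂ) (hb : (1 + b).det ≠ 0) :
    cayley (cayley b) = b := by
  have hu : IsUnit (1 + b).det := isUnit_iff_ne_zero.mpr hb
  have hN1 : (1 + b) * (1 + b)⁻¹ = 1 := Matrix.mul_nonsing_inv _ hu
  have hN2 : (1 + b)⁻¹ * (1 + b) = 1 := Matrix.nonsing_inv_mul _ hu
  have hinv : (1 + cayley b)⁻¹ = (2:ℂ)⁻¹ • (1 + b) := by
    apply Matrix.inv_eq_right_inv
    rw [one_add_cayley b hb, mul_smul_comm, Matrix.mul_assoc, hN2, mul_one]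
    rw [show ((1:Matrix (Fin n) (Fin n) ℂ) + 1) = (2:ℂ) • 1 by simp [two_smul]]
    rw [smul_smul]
    norm_num
  show (1 - cayley b) * (1 + cayley b)⁻¹ = b
  rw [one_sub_cayley b hb, hinv, mul_smul_comm, Matrix.mul_assoc, hN2, mul_one]
  rw [show (b + b) = (2:ℂ) • b by simp [two_smul]]
  rw [smul_smul]
  norm_num

lemma cayley_hasDerivAt {n : ℕ} (f : ℝ → Matrix (Fin n) (Fin n) ℂ)
    (f' : Matrix (Fin n) (Fin n) ℂ) (t : ℝ)
    (hf : HasDerivAt f f' t) (hdet : (1 + f t).det ≠ 0) :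
    HasDerivAt (fun u : ℝ => cayley (f u))
      ((-f') * (1 + f t)⁻¹ + (1 - f t) * (-((1 + f t)⁻¹ * f' * (1 + f t)⁻¹))) t := by
  have hu : IsUnit (1 + f t) := (Matrix.isUnit_iff_isUnit_det _).2 (isUnit_iff_ne_zero.2 hdet)
  have hD : HasDerivAt (fun u => 1 + f u) f' t := hf.const_add 1
  have hinv : HasDerivAt (fun u : ℝ => Ring.inverse (1 + f u))
      (-((1 + f t)⁻¹ * f' * (1 + f t)⁻¹)) t := by
    have h := (hasFDerivAt_ringInverse (𝕜 := ℝ) hu.unit).comp_hasDerivAt t hD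
    have hcoe : (↑hu.unit⁻¹ : Matrix (Fin n) (Fin n) ℂ) = (1 + f t)⁻¹ := by
      rw [Matrix.coe_units_inv, IsUnit.unit_spec]
    simp [hcoe] at h
    exact h
  have hsub : HasDerivAt (fun u => 1 - f u) (-f') t := hf.const_sub 1
  have := hsub.mul hinv
  have hfun : (fun u : ℝ => cayley (f u)) =
      fun u : ℝ => (1 - f u) * Ring.inverse (1 + f u) := by
    funext u
    rw [cayley, Matrix.nonsing_inv_eq_ringInverse]
  rw [hfun]
  simp [← Matrix.nonsing_inv_eq_ringInverse] at this ⊢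
  exact this

lemma riccati_alg {n : ℕ} (a M N : Matrix (Fin n) (Fin n) ℂ)
    (hN1 : (1 + M) * N = 1) (hN2 : N * (1 + M) = 1) :
    (-((-2:ℂ) • (a * M))) * N + (1 - M) * (-(N * ((-2:ℂ) • (a * M)) * N))
      = ((1 + 1) * N) * a * ((M + M) * N) := by
  have hcomm : (1 - M) * N = N * (1 - M) := by
    have h : (1 + M) * (1 - M) = (1 - M) * (1 + M) := by noncomm_ring
    calc (1-M)*N = N * ((1+M) * ((1-M) * N)) := by
          rw [← Matrix.mul_assoc, ← Matrix.mul_assoc, hN2, one_mul]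
      _ = N * ((1-M) * ((1+M) * N)) := by
          congr 1
          rw [← Matrix.mul_assoc, h, Matrix.mul_assoc]
      _ = N * (1-M) := by rw [hN1, mul_one]
  have e1 : a * (M * N) = N * ((1+M) * (a * (M * N))) := by
    conv_rhs => rw [← Matrix.mul_assoc, hN2, one_mul]
  have e2 : (1 - M) * (N * (a * (M * N))) = N * ((1-M) * (a * (M * N))) := by
    conv_rhs => rw [← Matrix.mul_assoc, ← hcomm, Matrix.mul_assoc]
  have step : (-((-2:ℂ) • (a * M))) * N + (1 - M) * (-(N * ((-2:ℂ) • (a * M)) * N))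
      = (2:ℂ) • (a * (M * N)) + (2:ℂ) • ((1 - M) * (N * (a * (M * N)))) := by
    simp only [neg_smul, neg_neg, Matrix.smul_mul, Matrix.mul_smul, Matrix.mul_neg,
      Matrix.neg_mul, smul_neg, Matrix.mul_assoc]
  calc (-((-2:ℂ) • (a * M))) * N + (1 - M) * (-(N * ((-2:ℂ) • (a * M)) * N))
      = (2:ℂ) • (a * (M * N)) + (2:ℂ) • ((1 - M) * (N * (a * (M * N)))) := step
    _ = (2:ℂ) • (N * ((1+M) * (a * (M * N)))) + (2:ℂ) • (N * ((1-M) * (a * (M * N)))) := by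
        rw [← e1, ← e2]
    _ = ((1 + 1) * N) * a * ((M + M) * N) := by
        rw [two_smul, two_smul]; noncomm_ring

theorem riccati_solution {n : ℕ} (a b : Matrix (Fin n) (Fin n) ℂ)
    (hb : (1 + b).det ≠ 0) (s : Set ℝ) (hs : IsOpen s) (h0 : (0 : ℝ) ∈ s)
    (hdet : ∀ t ∈ s, (1 + NormedSpace.exp (((-2 : ℂ) * t) • a) * cayley b).det ≠ 0) :
    cayley (NormedSpace.exp (((-2 : ℂ) * (0 : ℝ)) • a) * cayley b) = b ∧
      ∀ t ∈ s, HasDerivAt (fun u : ℝ => cayley (NormedSpace.exp (((-2 : ℂ) * u) • a) * cayley b))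
        ((1 + cayley (NormedSpace.exp (((-2 : ℂ) * t) • a) * cayley b)) * a *
          (1 - cayley (NormedSpace.exp (((-2 : ℂ) * t) • a) * cayley b))) t := by
  constructor
  · have : NormedSpace.exp (((-2 : ℂ) * ((0:ℝ):ℂ)) • a) = 1 := by
      norm_num [exp_zero]
    rw [this, one_mul, cayley_cayley b hb]
  · intro t ht
    set f : ℝ → Matrix (Fin n) (Fin n) ℂ :=
      fun u => NormedSpace.exp (((-2 : ℂ) * u) • a) * cayley b with hfdef
    have hd : (1 + f t).det ≠ 0 := hdet t ht
    have hf : HasDerivAt f ((-2:ℂ) • (a * f t)) t := by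
      have hlin : HasDerivAt (fun u : ℝ => ((-2 : ℂ) * u)) (-2) t := by
        simpa using ((hasDerivAt_id t).ofReal_comp.const_mul (-2 : ℂ))
      have hexp := (hasDerivAt_exp_smul_const' (𝕂 := ℂ) a ((-2:ℂ) * t)).scomp t hlin
      have := hexp.mul_const (cayley b)
      simp [hfdef, smul_smul, Matrix.smul_mul, Matrix.mul_assoc] at this ⊢
      exact this
    have key := cayley_hasDerivAt f ((-2:ℂ) • (a * f t)) t hf hd
    have halg := riccati_alg a (f t) (1 + f t)⁻¹
      (Matrix.mul_nonsing_inv _ (isUnit_iff_ne_zero.mpr hd))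
      (Matrix.nonsing_inv_mul _ (isUnit_iff_ne_zero.mpr hd))
    rw [show ((1 + cayley (NormedSpace.exp (((-2 : ℂ) * t) • a) * cayley b)) * a *
          (1 - cayley (NormedSpace.exp (((-2 : ℂ) * t) • a) * cayley b)))
        = ((1 + 1) * (1 + f t)⁻¹) * a * ((f t + f t) * (1 + f t)⁻¹) by
      show (1 + cayley (f t)) * a * (1 - cayley (f t)) = _
      rw [one_add_cayley (f t) hd, one_sub_cayley (f t) hd]]
    rw [← halg]
    exact key
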